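/- Fix n ≥ 1 and set a_{n+1} = 0, a_{n+2} = 1. Let D ⊆ (ℂ∖{0,1})ⁿ be an open set contained in {a : aᵢ ≠ aⱼ for i ≠ j}, and let B₁,…,B_{n+2} : D → M₂(ℂ) be holomorphic 2×2-matrix-valued functions of a = (a₁,…,aₙ) satisfying the Schlesinger equations with two fixed points: ∂Bᵢ/∂aⱼ = [Bᵢ,Bⱼ]/(aᵢ−aⱼ) for all i ∈ {1,…,n+2}, j ∈ {1,…,n} with i ≠ j, and ∂Bⱼ/∂aⱼ = −∑_{l=1,…,n+2, l≠j} [Bⱼ,B_l]/(aⱼ−a_l) for j ∈ {1,…,n}. Suppose ∑_{i=1}^{n+2} Bᵢ(a) = diag(θ,−θ) for all a ∈ D with θ ∈ ℂ constant and 2θ+1 ≠ 0. Define b(a) = ∑_{i=1}^{n} aᵢ·(Bᵢ(a))₁₂ + (B_{n+2}(a))₁₂. If at some point a⁰ ∈ D one has b(a⁰) = 0 and ∂b/∂aⱼ(a⁰) = 0 for all j = 1,…,n, then (Bᵢ(a⁰))₁₂ = 0 for ALL i = 1,…,n+2. -/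

import Mathlib

attribute [local instance] Matrix.normedAddCommGroup Matrix.normedSpace

/-- The `n+2` singular points: the moving points `a₁, …, aₙ` together with the
fixed points `a_{n+1} = 0` and `a_{n+2} = 1`. -/
noncomputable def extPts (n : ℕ) (a : Fin n → ℂ) : Fin (n + 2) → ℂ :=
  fun i => if h : (i : ℕ) < n then a ⟨i, h⟩ else if (i : ℕ) = n then 0 else 1

 noncomputable def entry01 : Matrix (Fin 2) (Fin 2) ℂ →L[ℂ] ℂ :=
  LinearMap.toContinuousLinearMap
    { toFun := fun M => M 0 1
      map_add' := fun _ _ => rfl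
      map_smul' := fun _ _ => rfl }

lemma entry01_apply (M : Matrix (Fin 2) (Fin 2) ℂ) : entry01 M = M 0 1 := rfl

lemma extPts_castAdd (n : ℕ) (a : Fin n → ℂ) (j : Fin n) :
    extPts n a (Fin.castAdd 2 j) = a j := by
  simp [extPts, Fin.coe_castAdd, j.isLt]

lemma extPts_diff (n : ℕ) (i : Fin (n + 2)) :
    Differentiable ℂ (fun a : Fin n → ℂ => extPts n a i) := by
  by_cases h : (i : ℕ) < n
  · simp only [extPts, dif_pos h]
    exact (ContinuousLinearMap.proj (R := ℂ) (φ := fun _ : Fin n => ℂ)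
      (⟨i, h⟩ : Fin n)).differentiable
  · simp only [extPts, dif_neg h]
    exact differentiable_const _

lemma fderiv_extPts (n : ℕ) (i : Fin (n + 2)) (a0 : Fin n → ℂ) (j : Fin n) :
    fderiv ℂ (fun a : Fin n → ℂ => extPts n a i) a0 (Pi.single j 1) =
      if i = Fin.castAdd 2 j then 1 else 0 := by
  by_cases h : (i : ℕ) < n
  · simp only [extPts, dif_pos h]
    have : fderiv ℂ (fun a : Fin n → ℂ => a ⟨i, h⟩) a0 =
        ContinuousLinearMap.proj (R := ℂ) (φ := fun _ : Fin n => ℂ) (⟨i, h⟩ : Fin n) :=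
      (ContinuousLinearMap.proj (R := ℂ) (φ := fun _ : Fin n => ℂ)
        (⟨i, h⟩ : Fin n)).fderiv
    rw [this]
    have hiff : i = Fin.castAdd 2 j ↔ (⟨i, h⟩ : Fin n) = j := by
      rw [Fin.ext_iff, Fin.ext_iff]; simp
    simp only [ContinuousLinearMap.proj_apply, Pi.single_apply]
    by_cases hij : (⟨i, h⟩ : Fin n) = j
    · rw [if_pos hij, if_pos (hiff.mpr hij)]
    · rw [if_neg hij, if_neg (fun hc => hij (hiff.mp hc))]
  · simp only [extPts, dif_neg h]
    have hne : i ≠ Fin.castAdd 2 j := by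
      intro hc; apply h; rw [hc]; simp [j.isLt]
    rw [if_neg hne]
    rw [fderiv_fun_const]
    rfl

/-- If `2θ+1 ≠ 0` and at a point `a⁰` both `b(a⁰) = 0` and `db(a⁰) = 0`, then all the
upper-right entries `(Bᵢ(a⁰))₁₂` vanish (so the monodromy would be reducible). -/
theorem schlesinger_vanishing_differential_gives_reducibility
    (n : ℕ) (hn : 1 ≤ n) (D : Set (Fin n → ℂ)) (hD : IsOpen D)
    (hD01 : ∀ a ∈ D, ∀ i : Fin n, a i ≠ 0 ∧ a i ≠ 1)
    (hDdist : ∀ a ∈ D, ∀ i j : Fin (n + 2), i ≠ j → extPts n a i ≠ extPts n a j)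
    (B : Fin (n + 2) → (Fin n → ℂ) → Matrix (Fin 2) (Fin 2) ℂ)
    (hBdiff : ∀ i, DifferentiableOn ℂ (B i) D)
    (hSch_off : ∀ (i : Fin (n + 2)) (j : Fin n), i ≠ Fin.castAdd 2 j → ∀ a ∈ D,
      fderiv ℂ (B i) a (Pi.single j 1) =
        (extPts n a i - a j)⁻¹ •
          (B i a * B (Fin.castAdd 2 j) a - B (Fin.castAdd 2 j) a * B i a))
    (hSch_diag : ∀ j : Fin n, ∀ a ∈ D,
      fderiv ℂ (B (Fin.castAdd 2 j)) a (Pi.single j 1) =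
        -∑ l ∈ Finset.univ.erase (Fin.castAdd 2 j),
          (a j - extPts n a l)⁻¹ •
            (B (Fin.castAdd 2 j) a * B l a - B l a * B (Fin.castAdd 2 j) a))
    (θ : ℂ) (hθ : 2 * θ + 1 ≠ 0)
    (hsum : ∀ a ∈ D, ∑ i, B i a = Matrix.diagonal ![θ, -θ])
    (b : (Fin n → ℂ) → ℂ)
    (hb : ∀ a, b a = ∑ i, extPts n a i * B i a 0 1)
    (a0 : Fin n → ℂ) (ha0 : a0 ∈ D)
    (hb0 : b a0 = 0)
    (hdb0 : ∀ j : Fin n, fderiv ℂ b a0 (Pi.single j 1) = 0) :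
    ∀ i : Fin (n + 2), B i a0 0 1 = 0 := by
  classical
  have hBa : ∀ k, DifferentiableAt ℂ (B k) a0 := fun k =>
    (hBdiff k).differentiableAt (hD.mem_nhds ha0)
  have hEnt : ∀ k, DifferentiableAt ℂ (fun a => B k a 0 1) a0 := fun k =>
    (entry01.differentiableAt).comp a0 (hBa k)
  have hEntD : ∀ k (v : Fin n → ℂ),
      fderiv ℂ (fun a => B k a 0 1) a0 v = (fderiv ℂ (B k) a0 v) 0 1 := by
    intro k v
    have h1 : fderiv ℂ (fun a => entry01 (B k a)) a0 =
        (fderiv ℂ (⇑entry01) (B k a0)).comp (fderiv ℂ (B k) a0) :=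
      fderiv_comp' a0 (entry01.differentiableAt) (hBa k)
    rw [ContinuousLinearMap.fderiv] at h1
    have h2 : (fun a => B k a 0 1) = fun a => entry01 (B k a) := rfl
    rw [h2, h1]
    rfl
  have hbfun : b = fun a => ∑ i, extPts n a i * B i a 0 1 := funext hb
  -- Step 1: the moving entries vanish
  have hmov : ∀ j : Fin n, B (Fin.castAdd 2 j) a0 0 1 = 0 := by
    intro j
    have hterm : ∀ i : Fin (n + 2),
        DifferentiableAt ℂ (fun a => extPts n a i * B i a 0 1) a0 := fun i =>
      ((extPts_diff n i) a0).mul (hEnt i)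
    have hD1 : fderiv ℂ b a0 (Pi.single j 1) = ∑ i,
        (extPts n a0 i * (fderiv ℂ (B i) a0 (Pi.single j 1)) 0 1 +
          B i a0 0 1 * (if i = Fin.castAdd 2 j then 1 else 0)) := by
      rw [hbfun, fderiv_fun_sum (fun i _ => hterm i)]
      rw [ContinuousLinearMap.sum_apply]
      refine Finset.sum_congr rfl fun i _ => ?_
      rw [fderiv_fun_mul ((extPts_diff n i) a0) (hEnt i)]
      rw [ContinuousLinearMap.add_apply, ContinuousLinearMap.smul_apply,
        ContinuousLinearMap.smul_apply]
      rw [hEntD i (Pi.single j 1), fderiv_extPts n i a0 j]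
      simp [smul_eq_mul]
    -- entry of the diagonal Schlesinger equation
    have hE0 : (fderiv ℂ (B (Fin.castAdd 2 j)) a0 (Pi.single j 1)) 0 1 =
        ∑ l ∈ Finset.univ.erase (Fin.castAdd 2 j),
          (a0 j - extPts n a0 l)⁻¹ *
            ((B l a0 * B (Fin.castAdd 2 j) a0) 0 1 -
              (B (Fin.castAdd 2 j) a0 * B l a0) 0 1) := by
      rw [hSch_diag j a0 ha0]
      simp only [Matrix.neg_apply, Matrix.sum_apply, Matrix.smul_apply,
        Matrix.sub_apply, smul_eq_mul]
      rw [← Finset.sum_neg_distrib]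
      exact Finset.sum_congr rfl fun l _ => by ring
    -- entries of the off-diagonal Schlesinger equations
    have hEoff : ∀ i ∈ Finset.univ.erase (Fin.castAdd 2 j),
        extPts n a0 i * (fderiv ℂ (B i) a0 (Pi.single j 1)) 0 1
          = extPts n a0 i * ((extPts n a0 i - a0 j)⁻¹ *
              ((B i a0 * B (Fin.castAdd 2 j) a0) 0 1 -
                (B (Fin.castAdd 2 j) a0 * B i a0) 0 1)) := by
      intro i hi
      rw [hSch_off i j (Finset.mem_erase.mp hi).1 a0 ha0]
      simp only [Matrix.smul_apply, Matrix.sub_apply, smul_eq_mul]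
    have hei0 : extPts n a0 (Fin.castAdd 2 j) = a0 j := extPts_castAdd n a0 j
    have key : fderiv ℂ b a0 (Pi.single j 1) =
        (2 * θ + 1) * B (Fin.castAdd 2 j) a0 0 1 := by
      rw [hD1, Finset.sum_add_distrib]
      have h2 : ∑ i, B i a0 0 1 * (if i = Fin.castAdd 2 j then 1 else 0)
          = B (Fin.castAdd 2 j) a0 0 1 := by
        simp [mul_ite]
      rw [h2]
      rw [← Finset.add_sum_erase _ _ (Finset.mem_univ (Fin.castAdd 2 j))]
      rw [hE0, Finset.sum_congr rfl hEoff, hei0, Finset.mul_sum,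
        ← Finset.sum_add_distrib]
      have h4 : ∀ i ∈ Finset.univ.erase (Fin.castAdd 2 j),
          a0 j * ((a0 j - extPts n a0 i)⁻¹ *
              ((B i a0 * B (Fin.castAdd 2 j) a0) 0 1 -
                (B (Fin.castAdd 2 j) a0 * B i a0) 0 1))
            + extPts n a0 i * ((extPts n a0 i - a0 j)⁻¹ *
              ((B i a0 * B (Fin.castAdd 2 j) a0) 0 1 -
                (B (Fin.castAdd 2 j) a0 * B i a0) 0 1))
          = (B i a0 * B (Fin.castAdd 2 j) a0) 0 1 -
              (B (Fin.castAdd 2 j) a0 * B i a0) 0 1 := by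
        intro i hi
        have hne : extPts n a0 i ≠ a0 j := by
          have := hDdist a0 ha0 i (Fin.castAdd 2 j) (Finset.mem_erase.mp hi).1
          rwa [hei0] at this
        have h5 : extPts n a0 i - a0 j ≠ 0 := sub_ne_zero.mpr hne
        have h6 : a0 j - extPts n a0 i ≠ 0 := sub_ne_zero.mpr (Ne.symm hne)
        field_simp
        ring
      rw [Finset.sum_congr rfl h4]
      have h7 : ∑ i ∈ Finset.univ.erase (Fin.castAdd 2 j),
          ((B i a0 * B (Fin.castAdd 2 j) a0) 0 1 -
            (B (Fin.castAdd 2 j) a0 * B i a0) 0 1)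
          = ∑ i, ((B i a0 * B (Fin.castAdd 2 j) a0) 0 1 -
            (B (Fin.castAdd 2 j) a0 * B i a0) 0 1) :=
        Finset.sum_erase _ (by ring)
      rw [h7]
      have h8 : ∑ i, ((B i a0 * B (Fin.castAdd 2 j) a0) 0 1 -
            (B (Fin.castAdd 2 j) a0 * B i a0) 0 1)
          = 2 * θ * B (Fin.castAdd 2 j) a0 0 1 := by
        rw [Finset.sum_sub_distrib, ← Matrix.sum_apply, ← Matrix.sum_apply,
          ← Finset.sum_mul, ← Finset.mul_sum, hsum a0 ha0,
          Matrix.diagonal_mul, Matrix.mul_diagonal]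
        simp
        ring
      rw [h8]
      ring
    have h0 := hdb0 j
    rw [key] at h0
    exact (mul_eq_zero.mp h0).resolve_left hθ
  -- all the moving entries vanish
  have hxlt : ∀ i : Fin (n + 2), (i : ℕ) < n → B i a0 0 1 = 0 := by
    intro i h
    have hieq : i = Fin.castAdd 2 ⟨(i : ℕ), h⟩ := by
      apply Fin.ext; simp
    rw [hieq]; exact hmov _
  -- the last entry vanishes, from b(a0) = 0
  have hxN1 : B (⟨n + 1, by omega⟩ : Fin (n + 2)) a0 0 1 = 0 := by
    have hsum0 : ∑ i, extPts n a0 i * B i a0 0 1 = 0 := by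
      rw [← hb a0]; exact hb0
    have hone : ∑ i, extPts n a0 i * B i a0 0 1
        = B (⟨n + 1, by omega⟩ : Fin (n + 2)) a0 0 1 := by
      rw [Finset.sum_eq_single (⟨n + 1, by omega⟩ : Fin (n + 2))]
      · have : extPts n a0 (⟨n + 1, by omega⟩ : Fin (n + 2)) = 1 := by
          simp [extPts]
        rw [this, one_mul]
      · intro i _ hne
        rcases lt_trichotomy (i : ℕ) n with h | h | h
        · rw [hxlt i h, mul_zero]
        · have : extPts n a0 i = 0 := by simp [extPts, h]
          rw [this, zero_mul]
        · exfalso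
          apply hne
          apply Fin.ext
          have := i.isLt
          simp only []
          omega
      · simp
    rw [hone] at hsum0
    exact hsum0
  -- the entry at the fixed point 0 vanishes, from the trace condition
  have hsx : ∑ i, B i a0 0 1 = 0 := by
    have h := congrFun (congrFun (hsum a0 ha0) 0) 1
    rw [Matrix.sum_apply] at h
    rw [h]
    simp [Matrix.diagonal_apply_ne]
  have hxN : B (⟨n, by omega⟩ : Fin (n + 2)) a0 0 1 = 0 := by
    have hone : ∑ i, B i a0 0 1 = B (⟨n, by omega⟩ : Fin (n + 2)) a0 0 1 := by
      rw [Finset.sum_eq_single (⟨n, by omega⟩ : Fin (n + 2))]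
      · intro i _ hne
        rcases lt_trichotomy (i : ℕ) n with h | h | h
        · exact hxlt i h
        · exfalso; apply hne; apply Fin.ext; simpa using h
        · have hieq : i = (⟨n + 1, by omega⟩ : Fin (n + 2)) := by
            apply Fin.ext
            have := i.isLt
            simp only []
            omega
          rw [hieq]; exact hxN1
      · simp
    rw [← hone]
    exact hsx
  intro i
  rcases lt_trichotomy (i : ℕ) n with h | h | h
  · exact hxlt i h
  · have hieq : i = (⟨n, by omega⟩ : Fin (n + 2)) := by apply Fin.ext; simpa using h
    rw [hieq]; exact hxN
  · have hieq : i = (⟨n + 1, by omega⟩ : Fin (n + 2)) := by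
      apply Fin.ext
      have := i.isLt
      simp only []
      omega
    rw [hieq]; exact hxN1
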